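/- For any Følner sequence (K_n) in (ℕ,×) there exists a set A ⊆ ℕ with (K_n)-density 1 and universal additive density 0; that is, |A ∩ K_n|/|K_n| → 1, while for every Følner sequence (F_n) in (ℕ,+), |A ∩ F_n|/|F_n| → 0. -/

import Mathlib

open Filter

/- `(F n)` is a Følner sequence in `(ℕ,+)`. -/
def AddFolner (F : ℕ → Finset ℕ) : Prop :=
  (∀ n, (F n).Nonempty) ∧
  ∀ k : ℕ, Tendsto
    (fun n => (((F n).filter (fun m => m + k ∈ F n)).card : ℝ) / (F n).card)
    atTop (nhds 1)

/- `(F n)` is a Følner sequence in `(ℕ,×)` (positive integers under multiplication). -/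
def MulFolner (F : ℕ → Finset ℕ) : Prop :=
  (∀ n, (F n).Nonempty) ∧ (∀ n, 0 ∉ F n) ∧
  ∀ k : ℕ, 0 < k → Tendsto
    (fun n => (((F n).filter (fun m => k * m ∈ F n)).card : ℝ) / (F n).card)
    atTop (nhds 1)

open scoped Classical in
/-- Along a multiplicative Følner sequence, the multiples of `k` have density `1`. -/
lemma mul_dvd_density (K : ℕ → Finset ℕ)
    (hne : ∀ n, (K n).Nonempty)
    (hfol : ∀ k : ℕ, 0 < k → Tendsto
      (fun n => (((K n).filter (fun m => k * m ∈ K n)).card : ℝ) / (K n).card)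
      atTop (nhds 1))
    (k : ℕ) (hk : 0 < k) :
    Tendsto (fun n => (((K n).filter (fun m => k ∣ m)).card : ℝ) / (K n).card)
      atTop (nhds 1) := by
  refine tendsto_of_tendsto_of_tendsto_of_le_of_le (hfol k hk) tendsto_const_nhds
    (fun n => ?_) (fun n => ?_)
  · have hpos : (0:ℝ) < (K n).card := by exact_mod_cast (hne n).card_pos
    rw [div_le_div_iff_of_pos_right hpos]
    have : (((K n).filter (fun m => k * m ∈ K n)).image (fun m => k * m)) ⊆
        (K n).filter (fun m => k ∣ m) := by
      intro x hx
      simp only [Finset.mem_image, Finset.mem_filter] at hx ⊢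
      obtain ⟨m, ⟨-, hm2⟩, rfl⟩ := hx
      exact ⟨hm2, Dvd.intro m rfl⟩
    calc (((K n).filter (fun m => k * m ∈ K n)).card : ℝ)
        = (((K n).filter (fun m => k * m ∈ K n)).image (fun m => k * m)).card := by
          rw [Finset.card_image_of_injective _ (mul_right_injective₀ hk.ne')]
      _ ≤ _ := by exact_mod_cast Finset.card_le_card this
  · have hpos : (0:ℝ) < (K n).card := by exact_mod_cast (hne n).card_pos
    rw [div_le_one hpos]
    exact_mod_cast Finset.card_le_card (Finset.filter_subset _ _)

open scoped Classical in
/-- The cardinalities of an additive Følner sequence tend to infinity. -/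
lemma addFolner_card_atTop (F : ℕ → Finset ℕ) (hF : AddFolner F) :
    Tendsto (fun n => ((F n).card : ℝ)) atTop atTop := by
  have hpos : ∀ n, (0:ℝ) < (F n).card := fun n => by exact_mod_cast (hF.1 n).card_pos
  have key : Tendsto (fun n => ((F n).card : ℝ)⁻¹) atTop (nhds 0) := by
    have hle : ∀ n, ((F n).card : ℝ)⁻¹ ≤ 1 - (((F n).filter (fun m => m + 1 ∈ F n)).card : ℝ) / (F n).card := by
      intro n
      have hsub : (F n).filter (fun m => m + 1 ∈ F n) ⊆ (F n).erase ((F n).max' (hF.1 n)) := by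
        intro m hm
        simp only [Finset.mem_filter] at hm
        refine Finset.mem_erase.2 ⟨?_, hm.1⟩
        intro h
        subst h
        exact absurd (Finset.le_max' _ _ hm.2) (by omega)
      have hc : (((F n).filter (fun m => m + 1 ∈ F n)).card : ℝ) ≤ (F n).card - 1 := by
        have h0 := Finset.card_le_card hsub
        rw [Finset.card_erase_of_mem ((F n).max'_mem (hF.1 n))] at h0
        have h1 : 1 ≤ (F n).card := (hF.1 n).card_pos
        have h2 := (Nat.cast_le (α := ℝ)).2 h0
        rwa [Nat.cast_sub h1, Nat.cast_one] at h2
      rw [le_sub_iff_add_le, inv_eq_one_div, ← add_div, div_le_one (hpos n)]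
      linarith [hc]
    have h2 : Tendsto (fun n => 1 - (((F n).filter (fun m => m + 1 ∈ F n)).card : ℝ) / (F n).card) atTop (nhds 0) := by
      have := (tendsto_const_nhds (x := (1:ℝ)) (f := atTop (α := ℕ))).sub (hF.2 1)
      simpa using this
    exact tendsto_of_tendsto_of_tendsto_of_le_of_le tendsto_const_nhds h2
      (fun n => by positivity) hle
  rw [tendsto_atTop]
  intro b
  have hb : (0:ℝ) < max b 1 := lt_max_of_lt_right one_pos
  filter_upwards [key.eventually_lt_const (show (0:ℝ) < (max b 1)⁻¹ by positivity)] with n hn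
  have : max b 1 < ((F n).card : ℝ) :=
    ((inv_lt_inv₀ (hpos n) hb).1 hn)
  exact le_of_lt (lt_of_le_of_lt (le_max_left _ _) this)

open scoped Classical in
/-- Along an additive Følner sequence, the density of the multiples of `k` is asymptotically
at most `1/k`. -/
lemma add_dvd_upper (F : ℕ → Finset ℕ) (hF : AddFolner F) (k : ℕ) (hk : 0 < k) :
    ∃ b : ℕ → ℝ, Tendsto b atTop (nhds (1 / k)) ∧
      ∀ n, (((F n).filter (fun m => k ∣ m)).card : ℝ) / (F n).card ≤ b n := by
  refine ⟨fun n => (1 + ∑ j ∈ Finset.range k,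
      (1 - (((F n).filter (fun m => m + j ∈ F n)).card : ℝ) / (F n).card)) / k, ?_, ?_⟩
  · have hsum : Tendsto (fun n => ∑ j ∈ Finset.range k,
        (1 - (((F n).filter (fun m => m + j ∈ F n)).card : ℝ) / (F n).card)) atTop (nhds 0) := by
      have : Tendsto (fun n => ∑ j ∈ Finset.range k,
          (1 - (((F n).filter (fun m => m + j ∈ F n)).card : ℝ) / (F n).card)) atTop
          (nhds (∑ j ∈ Finset.range k, (0:ℝ))) := by
        refine tendsto_finset_sum _ fun j _ => ?_
        have := (tendsto_const_nhds (x := (1:ℝ)) (f := atTop (α := ℕ))).sub (hF.2 j)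
        simpa using this
      simpa using this
    have := ((tendsto_const_nhds (x := (1:ℝ)) (f := atTop (α := ℕ))).add hsum).div_const (k:ℝ)
    simpa using this
  · intro n
    have hpos : (0:ℝ) < (F n).card := by exact_mod_cast (hF.1 n).card_pos
    have hkR : (0:ℝ) < k := by exact_mod_cast hk
    -- key counting inequality in ℕ
    have hkey : ∀ j ∈ Finset.range k,
        ((F n).filter (fun m => k ∣ m)).card + ((F n).filter (fun m => m + j ∈ F n)).card ≤
        ((F n).filter (fun m => m % k = j)).card + (F n).card := by
      intro j hj
      rw [Finset.mem_range] at hj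
      have hinter : ((F n).filter (fun m => k ∣ m)) ∩ ((F n).filter (fun m => m + j ∈ F n)) =
          (F n).filter (fun m => k ∣ m ∧ m + j ∈ F n) := (Finset.filter_and _ _ _).symm
      have himg : (((F n).filter (fun m => k ∣ m ∧ m + j ∈ F n)).image (fun m => m + j)) ⊆
          (F n).filter (fun m => m % k = j) := by
        intro x hx
        simp only [Finset.mem_image, Finset.mem_filter] at hx ⊢
        obtain ⟨m, ⟨-, hd, hmem⟩, rfl⟩ := hx
        refine ⟨hmem, ?_⟩
        obtain ⟨c, rfl⟩ := hd
        rw [add_comm, Nat.add_mul_mod_self_left, Nat.mod_eq_of_lt hj]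
      have h1 : ((F n).filter (fun m => k ∣ m ∧ m + j ∈ F n)).card ≤
          ((F n).filter (fun m => m % k = j)).card := by
        calc ((F n).filter (fun m => k ∣ m ∧ m + j ∈ F n)).card
            = (((F n).filter (fun m => k ∣ m ∧ m + j ∈ F n)).image (fun m => m + j)).card :=
              (Finset.card_image_of_injective _ (add_left_injective j)).symm
          _ ≤ _ := Finset.card_le_card himg
      have h2 : (((F n).filter (fun m => k ∣ m)) ∪ ((F n).filter (fun m => m + j ∈ F n))).card ≤
          (F n).card := Finset.card_le_card (Finset.union_subset (Finset.filter_subset _ _)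
            (Finset.filter_subset _ _))
      have h3 := Finset.card_inter_add_card_union ((F n).filter (fun m => k ∣ m))
        ((F n).filter (fun m => m + j ∈ F n))
      rw [hinter] at h3
      omega
    have hfib : (F n).card = ∑ j ∈ Finset.range k,
        ((F n).filter (fun m => m % k = j)).card :=
      Finset.card_eq_sum_card_fiberwise (fun m _ => Finset.mem_range.2 (Nat.mod_lt _ hk))
    have hNsum : k * ((F n).filter (fun m => k ∣ m)).card +
        ∑ j ∈ Finset.range k, ((F n).filter (fun m => m + j ∈ F n)).card ≤
        (F n).card + k * (F n).card := by
      have := Finset.sum_le_sum hkey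
      rw [Finset.sum_add_distrib, Finset.sum_add_distrib, Finset.sum_const, Finset.sum_const,
        Finset.card_range, smul_eq_mul, smul_eq_mul] at this
      omega
    -- cast to ℝ and divide
    rw [div_le_div_iff₀ hpos hkR]
    have hcast : (k:ℝ) * ((F n).filter (fun m => k ∣ m)).card +
        ∑ j ∈ Finset.range k, (((F n).filter (fun m => m + j ∈ F n)).card : ℝ) ≤
        (F n).card + k * (F n).card := by exact_mod_cast hNsum
    have hexp : (1 + ∑ j ∈ Finset.range k,
        (1 - (((F n).filter (fun m => m + j ∈ F n)).card : ℝ) / (F n).card)) * (F n).card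
        = (F n).card + k * (F n).card -
          ∑ j ∈ Finset.range k, (((F n).filter (fun m => m + j ∈ F n)).card : ℝ) := by
      rw [Finset.sum_sub_distrib, ← Finset.sum_div, Finset.sum_const, Finset.card_range,
        nsmul_eq_mul, mul_one]
      field_simp
      ring
    rw [hexp]
    linarith [hcast]

/- For any Følner sequence `(K n)` in `(ℕ,×)` there exists a set `A ⊆ ℕ` with
`(K n)`-density `1` and universal additive density `0`: `|A ∩ K n|/|K n| → 1`, while
for every Følner sequence `(F n)` in `(ℕ,+)` one has `|A ∩ F n|/|F n| → 0`. -/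
open scoped Classical in
theorem exists_mulDense_addNull
    (K : ℕ → Finset ℕ) (hK : MulFolner K) :
    ∃ A : Set ℕ,
      Tendsto (fun n => (((K n).filter (· ∈ A)).card : ℝ) / (K n).card) atTop (nhds 1) ∧
      ∀ F : ℕ → Finset ℕ, AddFolner F →
        Tendsto (fun n => (((F n).filter (· ∈ A)).card : ℝ) / (F n).card) atTop (nhds 0) := by
  obtain ⟨hne, hzero, hfol⟩ := hK
  have hdens : ∀ j : ℕ, Tendsto
      (fun n => (((K n).filter (fun m => 2^j ∣ m)).card : ℝ) / (K n).card) atTop (nhds 1) :=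
    fun j => mul_dvd_density K hne hfol (2^j) (pow_pos two_pos j)
  have hM : ∀ j : ℕ, ∃ M, ∀ n ≥ M,
      1 - 1/((j:ℝ)+1) ≤ (((K n).filter (fun m => 2^j ∣ m)).card : ℝ) / (K n).card := by
    intro j
    have h1 : 1 - 1/((j:ℝ)+1) < 1 := by
      have : 0 < 1/((j:ℝ)+1) := by positivity
      linarith
    exact eventually_atTop.1 ((hdens j).eventually (eventually_ge_nhds h1))
  choose M hMspec using hM
  set N : ℕ → ℕ := fun j => j + ∑ i ∈ Finset.range (j+1), M i with hNdef
  have hjN : ∀ j, j ≤ N j := fun j => Nat.le_add_right _ _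
  have hMN : ∀ j, M j ≤ N j := fun j =>
    le_trans (Finset.single_le_sum (f := M) (fun i _ => Nat.zero_le _)
      (Finset.self_mem_range_succ j)) (Nat.le_add_left _ _)
  set J : ℕ → ℕ := fun n => Nat.findGreatest (fun j => N j ≤ n) n with hJdef
  set A : Set ℕ := {m | ∃ n, m ∈ K n ∧ 2^(J n) ∣ m} with hAdef
  have hJtop : Tendsto J atTop atTop := by
    refine tendsto_atTop_atTop.2 fun j => ⟨N j, fun n hn => ?_⟩
    exact Nat.le_findGreatest (le_trans (hjN j) hn) hn
  refine ⟨A, ?_, ?_⟩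
  · -- multiplicative density 1
    have hlowfun : Tendsto (fun n => 1 - 1/((J n : ℝ)+1)) atTop (nhds 1) := by
      have h1 : Tendsto (fun n => ((J n : ℝ)+1)) atTop atTop :=
        tendsto_atTop_add_const_right _ 1 (tendsto_natCast_atTop_atTop.comp hJtop)
      have h2 : Tendsto (fun n => 1/((J n : ℝ)+1)) atTop (nhds 0) := by
        simpa [one_div, Function.comp_def] using tendsto_inv_atTop_zero.comp h1
      have := (tendsto_const_nhds (x := (1:ℝ)) (f := atTop (α := ℕ))).sub h2
      simpa using this
    refine tendsto_of_tendsto_of_tendsto_of_le_of_le' hlowfun tendsto_const_nhds ?_ ?_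
    · filter_upwards [eventually_ge_atTop (N 1)] with n hn
      have h1n : 1 ≤ n := le_trans (hjN 1) hn
      have hNJ : N (J n) ≤ n := Nat.findGreatest_spec (P := fun j => N j ≤ n) h1n hn
      have hMJ : M (J n) ≤ n := le_trans (hMN (J n)) hNJ
      have hbound := hMspec (J n) n hMJ
      refine le_trans hbound ?_
      have hpos : (0:ℝ) < (K n).card := by exact_mod_cast (hne n).card_pos
      rw [div_le_div_iff_of_pos_right hpos]
      have hsub : (K n).filter (fun m => 2^(J n) ∣ m) ⊆ (K n).filter (· ∈ A) := by
        intro m hm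
        rw [Finset.mem_filter] at hm ⊢
        exact ⟨hm.1, ⟨n, hm.1, hm.2⟩⟩
      exact_mod_cast Finset.card_le_card hsub
    · refine Eventually.of_forall fun n => ?_
      have hpos : (0:ℝ) < (K n).card := by exact_mod_cast (hne n).card_pos
      rw [div_le_one hpos]
      exact_mod_cast Finset.card_le_card (Finset.filter_subset _ _)
  · -- universal additive density 0
    intro F hF
    rw [NormedAddCommGroup.tendsto_nhds_zero]
    intro ε hε
    obtain ⟨j, hj⟩ : ∃ j : ℕ, (1/(2:ℝ))^j < ε/2 :=
      exists_pow_lt_of_lt_one (half_pos hε) (by norm_num)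
    have hj' : 1/(((2:ℕ)^j : ℕ):ℝ) < ε/2 := by
      rw [div_pow, one_pow] at hj
      push_cast
      exact hj
    obtain ⟨b, hb, hble⟩ := add_dvd_upper F hF (2^j) (pow_pos two_pos j)
    set Junk : Finset ℕ := (Finset.range (N j)).biUnion K with hJunk
    have hsub : ∀ n, (F n).filter (· ∈ A) ⊆ ((F n).filter (fun m => 2^j ∣ m)) ∪ Junk := by
      intro n m hm
      rw [Finset.mem_filter] at hm
      obtain ⟨hmF, n', hmem, hdvd⟩ := hm
      by_cases h : 2^j ∣ m
      · exact Finset.mem_union_left _ (Finset.mem_filter.2 ⟨hmF, h⟩)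
      · refine Finset.mem_union_right _ (Finset.mem_biUnion.2 ⟨n', Finset.mem_range.2 ?_, hmem⟩)
        by_contra h2
        push_neg at h2
        have hjJ : j ≤ J n' := Nat.le_findGreatest (le_trans (hjN j) h2) h2
        exact h ((pow_dvd_pow 2 hjJ).trans hdvd)
    have hC : Tendsto (fun n => (Junk.card : ℝ)/(F n).card) atTop (nhds 0) := by
      have h1 := tendsto_inv_atTop_zero.comp (addFolner_card_atTop F hF)
      have := (tendsto_const_nhds (x := (Junk.card:ℝ)) (f := atTop (α := ℕ))).mul h1
      simpa [div_eq_mul_inv] using this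
    filter_upwards [hb.eventually_lt_const hj', hC.eventually_lt_const (half_pos hε)]
      with n h1 h2
    have hpos : (0:ℝ) < (F n).card := by exact_mod_cast (hF.1 n).card_pos
    have hineq : (((F n).filter (· ∈ A)).card : ℝ) / (F n).card ≤
        b n + (Junk.card : ℝ)/(F n).card := by
      have hcard : (((F n).filter (· ∈ A)).card : ℝ) ≤
          (((F n).filter (fun m => 2^j ∣ m)).card : ℝ) + Junk.card := by
        have := le_trans (Finset.card_le_card (hsub n)) (Finset.card_union_le _ _)
        exact_mod_cast this
      calc (((F n).filter (· ∈ A)).card : ℝ) / (F n).card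
          ≤ ((((F n).filter (fun m => 2^j ∣ m)).card : ℝ) + Junk.card) / (F n).card := by
            rw [div_le_div_iff_of_pos_right hpos]; exact hcard
        _ = (((F n).filter (fun m => 2^j ∣ m)).card : ℝ) / (F n).card +
            (Junk.card : ℝ)/(F n).card := add_div _ _ _
        _ ≤ b n + (Junk.card : ℝ)/(F n).card := add_le_add_left (hble n) _
    have hnonneg : (0:ℝ) ≤ (((F n).filter (· ∈ A)).card : ℝ) / (F n).card := by positivity
    rw [Real.norm_eq_abs, abs_of_nonneg hnonneg]
    linarith [hineq, h1, h2]
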